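/- Let f : ℕ → ℕ and let G be a finite graph admitting an f-flat decomposition of width k. Then for every r ∈ ℕ, col_r(G) ≤ (k+1)·f(r). -/

import Mathlib

open SimpleGraph

variable {V : Type} [Fintype V]

/-- The vertex sets `H 0, …, H (ℓ-1)` form a partition of `V`. -/
def IsDecomp {ℓ : ℕ} (H : Fin ℓ → Set V) : Prop :=
  (∀ i, (H i).Nonempty) ∧ (∀ i j, i ≠ j → Disjoint (H i) (H j)) ∧ (∀ v : V, ∃ i, v ∈ H i)

/-- The union of the parts strictly before `i`. -/
def before {ℓ : ℕ} (H : Fin ℓ → Set V) (i : Fin ℓ) : Set V :=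
  {v | ∃ j, j < i ∧ v ∈ H j}

/-- `C` is a (connected) component of `G − U`. -/
def IsCompOf (G : SimpleGraph V) (U C : Set V) : Prop :=
  C.Nonempty ∧ Disjoint C U ∧ (G.induce C).Connected ∧
    ∀ u ∈ C, ∀ v : V, v ∉ U → G.Adj u v → v ∈ C

/-- There is an edge of `G` between `A` and `C`. -/
def LinkedTo (G : SimpleGraph V) (A C : Set V) : Prop :=
  ∃ u ∈ A, ∃ v ∈ C, G.Adj u v

/-- The decomposition has width at most `k`: for every `i` and every component
`C` of `G` minus the parts before `i`, at most `k` of the earlier parts have an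
edge to `C`. -/
def WidthLE (G : SimpleGraph V) {ℓ : ℕ} (H : Fin ℓ → Set V) (k : ℕ) : Prop :=
  ∀ i : Fin ℓ, ∀ C : Set V, IsCompOf G (before H i) C →
    {j : Fin ℓ | j < i ∧ LinkedTo G (H j) C}.ncard ≤ k

/-- The decomposition is `f`-flat: each part `H i` `f`-spreads on the graph
obtained by deleting the earlier parts, i.e. for every `r` and every vertex `v`
outside the earlier parts, at most `f r` vertices of `H i` are reachable from
`v` by a walk of length at most `r` avoiding the earlier parts. -/
def IsFlat (G : SimpleGraph V) {ℓ : ℕ} (H : Fin ℓ → Set V) (f : ℕ → ℕ) : Prop :=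
  ∀ i : Fin ℓ, ∀ r : ℕ, ∀ v : V, v ∉ before H i →
    {u | u ∈ H i ∧ ∃ p : G.Walk v u, p.length ≤ r ∧
      ∀ w ∈ p.support, w ∉ before H i}.ncard ≤ f r

/-- Every part induces a connected subgraph. -/
def IsConnectedDecomp (G : SimpleGraph V) {ℓ : ℕ} (H : Fin ℓ → Set V) : Prop :=
  ∀ i, (G.induce (H i)).Connected

/-- `P` is the vertex set of an isometric path of `G` inside `S`: a path whose
support lies in `S` and which is a shortest among all walks in `S` between its
endpoints. -/
def IsIsomPathIn (G : SimpleGraph V) (S P : Set V) : Prop :=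
  ∃ (x y : V) (p : G.Walk x y), p.IsPath ∧ (∀ w ∈ p.support, w ∈ S) ∧
    P = {w | w ∈ p.support} ∧
    ∀ q : G.Walk x y, (∀ w ∈ q.support, w ∈ S) → p.length ≤ q.length

/-- The set of vertices strongly `r`-reachable from `v` with respect to `L`. -/
def SReach (G : SimpleGraph V) (L : LinearOrder V) (r : ℕ) (v : V) : Set V :=
  {u | ∃ p : G.Walk v u, p.IsPath ∧ p.length ≤ r ∧ L.le u v ∧
    ∀ w ∈ p.support, w ≠ u → w ≠ v → L.lt v w}

/-- The `r`-colouring number. -/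
noncomputable def col (G : SimpleGraph V) (r : ℕ) : ℕ :=
  sInf {k | ∃ L : LinearOrder V, ∀ v, (SReach G L r v).ncard ≤ k}


/-- Walks with support inside `C` give reachability in the induced graph. -/
lemma induce_reachable_aux {G : SimpleGraph V} {C : Set V} :
    ∀ {a b : V} (p : G.Walk a b) (hp : ∀ w ∈ p.support, w ∈ C),
    (G.induce C).Reachable ⟨a, hp a p.start_mem_support⟩ ⟨b, hp b p.end_mem_support⟩ := by
  intro a b p
  induction p with
  | nil => intro hp; rfl
  | @cons a c b h q ih =>
      intro hp
      have hc : c ∈ C := hp c (by simp)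
      have ha : a ∈ C := hp a (by simp)
      have hq : ∀ w ∈ q.support, w ∈ C := fun w hw => hp w (by simp [hw])
      have hadj : (G.induce C).Adj ⟨a, ha⟩ ⟨c, hc⟩ := h
      exact hadj.reachable.trans (ih hq)

/-- A finite union of sets each of cardinality at most `m` has cardinality at
most `card * m`. -/
lemma ncard_biUnion_le_mul {ι : Type*} [DecidableEq ι] (s : Finset ι) (A : ι → Set V)
    (m : ℕ) (h : ∀ j ∈ s, (A j).ncard ≤ m) :
    (⋃ j ∈ s, A j).ncard ≤ s.card * m := by
  induction s using Finset.induction_on with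
  | empty => simp
  | @insert a s ha ih =>
      rw [Finset.set_biUnion_insert, Finset.card_insert_of_notMem ha]
      calc (A a ∪ ⋃ j ∈ s, A j).ncard ≤ (A a).ncard + (⋃ j ∈ s, A j).ncard :=
            Set.ncard_union_le _ _
        _ ≤ m + s.card * m := by
            gcongr
            · exact h a (Finset.mem_insert_self a s)
            · exact ih fun j hj => h j (Finset.mem_insert_of_mem hj)
        _ = (s.card + 1) * m := by ring

/-- **Lemma (flat decompositions bound col_r).** If `G` admits an `f`-flat
decomposition of width `k`, then `col_r(G) ≤ (k+1)·f(r)`. -/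
theorem col_le_of_flat_decomp (G : SimpleGraph V) (f : ℕ → ℕ) (k : ℕ)
    {ℓ : ℕ} (H : Fin ℓ → Set V)
    (hdec : IsDecomp H) (hflat : IsFlat G H f) (hw : WidthLE G H k) (r : ℕ) :
    col G r ≤ (k + 1) * f r := by
  classical
  obtain ⟨hne, hdisj, hcov⟩ := hdec
  choose idx hmem using hcov
  -- uniqueness of the index
  have huniq : ∀ (v : V) (j : Fin ℓ), v ∈ H j → j = idx v := by
    intro v j hj
    by_contra hne'
    exact Set.disjoint_left.mp (hdisj j (idx v) hne') hj (hmem v)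
  -- a linear order refining the order of the parts
  let e := Fintype.equivFin V
  have hinj : Function.Injective (fun v : V => toLex ((idx v, e v) : Fin ℓ × Fin (Fintype.card V))) := by
    intro a b hab
    apply e.injective
    have : ((idx a, e a) : Fin ℓ × Fin (Fintype.card V)) = (idx b, e b) := hab
    exact congrArg Prod.snd this
  let L : LinearOrder V := LinearOrder.lift' _ hinj
  have hlt_idx : ∀ a b : V, L.lt a b → idx a ≤ idx b := by
    intro a b hab
    have h' : toLex ((idx a, e a) : Fin ℓ × Fin (Fintype.card V)) <
        toLex ((idx b, e b) : Fin ℓ × Fin (Fintype.card V)) := hab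
    rcases Prod.Lex.lt_iff.mp h' with h | h
    · exact h.le
    · exact h.1.le
  have hle_idx : ∀ a b : V, L.le a b → idx a ≤ idx b := by
    intro a b hab
    have h' : toLex ((idx a, e a) : Fin ℓ × Fin (Fintype.card V)) ≤
        toLex ((idx b, e b) : Fin ℓ × Fin (Fintype.card V)) := hab
    rcases Prod.Lex.le_iff.mp h' with h | h
    · exact h.le
    · exact h.1.le
  -- it suffices to bound `SReach` for this order
  apply Nat.sInf_le
  refine ⟨L, fun v => ?_⟩
  set i := idx v with hi
  have hvH : v ∈ H i := hmem v
  have hvU : v ∉ before H i := by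
    rintro ⟨j, hj, hvj⟩
    rw [huniq v j hvj] at hj
    exact lt_irrefl _ hj
  -- the component of `v` in `G - before H i`
  set C : Set V := {w | ∃ p : G.Walk v w, ∀ x ∈ p.support, x ∉ before H i} with hCdef
  have hvC : v ∈ C := ⟨Walk.nil, by simpa using hvU⟩
  have hCsup : ∀ {b : V} (p : G.Walk v b), (∀ x ∈ p.support, x ∉ before H i) →
      ∀ w ∈ p.support, w ∈ C := by
    intro b p hp w hw
    exact ⟨p.takeUntil w hw, fun x hx => hp x (p.support_takeUntil_subset hw hx)⟩
  have hC : IsCompOf G (before H i) C := by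
    refine ⟨⟨v, hvC⟩, ?_, ?_, ?_⟩
    · rw [Set.disjoint_left]
      rintro w ⟨p, hp⟩ hwU
      exact hp w p.end_mem_support hwU
    · rw [SimpleGraph.connected_iff]
      refine ⟨?_, ⟨⟨v, hvC⟩⟩⟩
      rintro ⟨a, pa, hpa⟩ ⟨b, pb, hpb⟩
      have h1 := induce_reachable_aux (C := C) pa (hCsup pa hpa)
      have h2 := induce_reachable_aux (C := C) pb (hCsup pb hpb)
      exact h1.symm.trans h2
    · rintro u ⟨p, hp⟩ w hwU hadj
      refine ⟨p.concat hadj, ?_⟩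
      intro x hx
      rw [Walk.support_concat, List.mem_append] at hx
      rcases hx with hx | hx
      · exact hp x hx
      · rw [List.mem_singleton] at hx; subst hx; exact hwU
  -- the linked parts
  set J : Set (Fin ℓ) := {j : Fin ℓ | j < i ∧ LinkedTo G (H j) C} with hJdef
  have hJ : J.ncard ≤ k := hw i C hC
  -- the flat sets
  set A : Fin ℓ → Set V := fun j => {u | u ∈ H j ∧ ∃ p : G.Walk v u, p.length ≤ r ∧
    ∀ w ∈ p.support, w ∉ before H j} with hAdef
  have hAcard : ∀ j : Fin ℓ, j ≤ i → (A j).ncard ≤ f r := by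
    intro j hj
    apply hflat j r v
    rintro ⟨j', hj', hvj'⟩
    rw [huniq v j' hvj'] at hj'
    exact absurd (lt_of_lt_of_le hj' hj) (lt_irrefl i)
  -- the key inclusion
  have hsub : SReach G L r v ⊆ ⋃ j ∈ (insert i J : Set (Fin ℓ)), A j := by
    rintro u ⟨p, hpath, hlen, hle, hint⟩
    have hj : idx u ≤ i := hle_idx u v hle
    have claim1 : ∀ w ∈ p.support, w ≠ u → w ∉ before H i := by
      intro w hw hwu hwU
      obtain ⟨j', hj', hwj'⟩ := hwU
      by_cases hwv : w = v
      · exact hvU (hwv ▸ ⟨j', hj', hwj'⟩)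
      · have := hlt_idx v w (hint w hw hwu hwv)
        rw [huniq w j' hwj'] at hj'
        exact absurd (lt_of_lt_of_le hj' this) (lt_irrefl _)
    have huA : u ∈ A (idx u) := by
      refine ⟨hmem u, p, hlen, ?_⟩
      intro w hw hwU
      by_cases hwu : w = u
      · subst hwu
        obtain ⟨j', hj', hwj'⟩ := hwU
        rw [huniq w j' hwj'] at hj'
        exact lt_irrefl _ hj'
      · rcases lt_or_eq_of_le hj with hlt | heq
        · obtain ⟨j', hj', hwj'⟩ := hwU
          exact claim1 w hw hwu ⟨j', lt_trans hj' hlt, hwj'⟩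
        · exact claim1 w hw hwu (heq ▸ hwU)
    rcases lt_or_eq_of_le hj with hlt | heq
    · -- idx u < i : show idx u ∈ J
      have huv : u ≠ v := by
        intro h; subst h; exact absurd hlt (lt_irrefl _)
      have hnotnil : ¬ p.reverse.Nil := Walk.not_nil_of_ne huv
      obtain ⟨x, hadj, q, hq⟩ := Walk.not_nil_iff.mp hnotnil
      have hqpath : (Walk.cons hadj q).IsPath := hq ▸ hpath.reverse
      have hu_not : u ∉ q.support := ((Walk.cons_isPath_iff _ _).mp hqpath).2
      have hqsup : ∀ w ∈ q.support, w ∈ p.support := by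
        intro w hw
        have : w ∈ p.reverse.support := by rw [hq]; simp [hw]
        rwa [Walk.support_reverse, List.mem_reverse] at this
      have hxC : x ∈ C := by
        refine ⟨q.reverse, ?_⟩
        intro w hw
        rw [Walk.support_reverse, List.mem_reverse] at hw
        exact claim1 w (hqsup w hw) (fun h => hu_not (h ▸ hw))
      have hJmem : idx u ∈ J := ⟨hlt, u, hmem u, x, hxC, hadj⟩
      exact Set.mem_biUnion (Set.mem_insert_of_mem _ hJmem) huA
    · exact Set.mem_biUnion (heq ▸ Set.mem_insert _ _) huA
  -- counting
  have hfin : (insert i J : Set (Fin ℓ)).Finite := Set.toFinite _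
  have heq : (⋃ j ∈ (insert i J : Set (Fin ℓ)), A j) = ⋃ j ∈ hfin.toFinset, A j := by
    ext x
    simp only [Set.mem_iUnion, Set.Finite.mem_toFinset]
  calc (SReach G L r v).ncard ≤ (⋃ j ∈ (insert i J : Set (Fin ℓ)), A j).ncard :=
        Set.ncard_le_ncard hsub (Set.toFinite _)
    _ = (⋃ j ∈ hfin.toFinset, A j).ncard := by rw [heq]
    _ ≤ hfin.toFinset.card * f r := by
        apply ncard_biUnion_le_mul
        intro j hj
        rw [Set.Finite.mem_toFinset] at hj
        rcases hj with hj | hj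
        · exact hAcard i (le_refl i) |>.trans_eq' (by rw [hj])
        · exact hAcard j hj.1.le
    _ ≤ (k + 1) * f r := by
        apply Nat.mul_le_mul_right
        have h1 : hfin.toFinset.card = (insert i J : Set (Fin ℓ)).ncard :=
          (Set.ncard_eq_toFinset_card _ hfin).symm
        rw [h1]
        calc (insert i J : Set (Fin ℓ)).ncard ≤ J.ncard + 1 := Set.ncard_insert_le _ _
          _ ≤ k + 1 := by omega
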